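/- Let q be a prime power, m ≥ 1, and let λ_j ∈ F_{q^m} for (m+1)/2 ≤ j ≤ i+1 (m odd, (m-2)/2 ≤ i ≤ m-2), not all zero. Define B(x,y) = Tr^{q^m}_q( (Σ_j (λ_j x^{q^j} + λ_j^{q^{-j}} x^{q^{-j}})) · y ) on F_{q^m}. Then the radical {x ∈ F_{q^m} : B(x,y) = 0 for all y ∈ F_{q^m}} is an F_q-subspace of dimension at most 2i + 2 - m; equivalently, B has rank at least 2m - 2i - 2. -/

import Mathlib

open Polynomial

/-- the radical of the symmetric bilinear form
`B(x,y) = Tr((Σ_j (λ_j x^{q^j} + λ_j^{q^{m-j}} x^{q^{m-j}})) y)` on `F_{q^m}`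
(with `m` odd, `(m-2)/2 ≤ i ≤ m-2`, and the `λ_j`, `(m+1)/2 ≤ j ≤ i+1`, not all zero)
is an `F_q`-subspace of dimension at most `2i + 2 - m`; equivalently, `B` has rank at
least `2m - 2i - 2`. -/
theorem radical_dimension_bound_trace_form
    (F K : Type*) [Field F] [Fintype F] [Field K] [Fintype K] [Algebra F K]
    (m i : ℕ) (hmodd : Odd m) (hfr : Module.finrank F K = m)
    (hi1 : m - 2 ≤ 2 * i) (hi2 : i ≤ m - 2)
    (lam : ℕ → K)
    (hne : ∃ j ∈ Finset.Icc ((m + 1) / 2) (i + 1), lam j ≠ 0)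
    (B : K → K → F)
    (hB : ∀ x y, B x y = Algebra.trace F K
      ((∑ j ∈ Finset.Icc ((m + 1) / 2) (i + 1),
        (lam j * x ^ Fintype.card F ^ j
          + lam j ^ Fintype.card F ^ (m - j) * x ^ Fintype.card F ^ (m - j))) * y)) :
    ∃ W : Submodule F K, (W : Set K) = {x : K | ∀ y : K, B x y = 0} ∧
      Module.finrank F ↥W ≤ 2 * i + 2 - m ∧
      2 * m - 2 * i - 2 ≤ Module.finrank F K - Module.finrank F ↥W := by
  classical
  obtain ⟨k, hk⟩ := hmodd
  set q := Fintype.card F with hq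
  have hq2 : 1 < q := Fintype.one_lt_card
  have hKcard : Fintype.card K = q ^ m := by rw [← hfr]; exact Module.card_eq_pow_finrank
  -- characteristic
  set p := ringChar F with hp
  haveI : CharP F p := ringChar.charP F
  have hpprime : p.Prime := CharP.char_is_prime F p
  haveI : Fact p.Prime := ⟨hpprime⟩
  haveI : CharP K p := charP_of_injective_algebraMap (algebraMap F K).injective p
  obtain ⟨s, -, hs⟩ := FiniteField.card F p
  have hqn : ∀ n : ℕ, q ^ n = p ^ ((s : ℕ) * n) := fun n => by rw [hq, hs, ← pow_mul]
  have hpow_add : ∀ (n : ℕ) (a b : K), (a + b) ^ q ^ n = a ^ q ^ n + b ^ q ^ n := by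
    intro n a b; rw [hqn]; exact add_pow_char_pow ..
  have hpow_sum : ∀ (n : ℕ) (t : Finset ℕ) (g : ℕ → K),
      (∑ j ∈ t, g j) ^ q ^ n = ∑ j ∈ t, g j ^ q ^ n := by
    intro n t g; rw [hqn]; exact sum_pow_char_pow ..
  have hwrap : ∀ (a : ℕ) (x : K), x ^ q ^ (a + m) = x ^ q ^ a := by
    intro a x
    rw [pow_add, pow_mul, ← hKcard, FiniteField.pow_card]
  -- the linearized map
  set Lf : K → K := fun x => ∑ j ∈ Finset.Icc ((m + 1) / 2) (i + 1),
      (lam j * x ^ q ^ j + lam j ^ q ^ (m - j) * x ^ q ^ (m - j)) with hLf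
  have hLadd : ∀ x y, Lf (x + y) = Lf x + Lf y := by
    intro x y
    simp only [hLf]
    rw [← Finset.sum_add_distrib]
    refine Finset.sum_congr rfl fun j _ => ?_
    rw [hpow_add, hpow_add]; ring
  have hfix : ∀ (a : F) (n : ℕ), (algebraMap F K a) ^ q ^ n = algebraMap F K a := by
    intro a n; rw [← map_pow, FiniteField.pow_card_pow]
  have hLsmul : ∀ (a : F) (x : K), Lf (a • x) = a • Lf x := by
    intro a x
    simp only [hLf, Finset.smul_sum]
    refine Finset.sum_congr rfl fun j _ => ?_
    rw [Algebra.smul_def, Algebra.smul_def, mul_pow, mul_pow, hfix, hfix]; ring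
  set Lmap : K →ₗ[F] K :=
    { toFun := Lf, map_add' := hLadd, map_smul' := fun a x => hLsmul a x } with hLmap
  set W := LinearMap.ker Lmap with hW
  -- radical = kernel
  have hset : (W : Set K) = {x : K | ∀ y : K, B x y = 0} := by
    ext x
    simp only [hW, SetLike.mem_coe, LinearMap.mem_ker, Set.mem_setOf_eq]
    have hLx : Lmap x = Lf x := rfl
    constructor
    · intro hx y
      rw [hB]
      have : (∑ j ∈ Finset.Icc ((m + 1) / 2) (i + 1),
          (lam j * x ^ q ^ j + lam j ^ q ^ (m - j) * x ^ q ^ (m - j))) = Lf x := rfl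
      have hx' : Lf x = 0 := hx
      rw [this, hx']
      simp
    · intro h
      rw [hLx]
      refine (traceForm_nondegenerate F K).1 (Lf x) fun y => ?_
      rw [Algebra.traceForm_apply]
      have := h y
      rw [hB] at this
      exact this
  -- index bookkeeping
  obtain ⟨j₀, hj₀mem, hj₀⟩ := hne
  obtain ⟨hj₀1, hj₀2⟩ := Finset.mem_Icc.mp hj₀mem
  -- the power polynomial
  set ψ : K[X] := ∑ j ∈ Finset.Icc ((m + 1) / 2) (i + 1),
      (C (lam j ^ q ^ (i + 1)) * X ^ q ^ (j + i + 1 - m)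
        + C ((lam j ^ q ^ (m - j)) ^ q ^ (i + 1)) * X ^ q ^ (i + 1 - j)) with hψ
  have heval : ∀ x : K, ψ.eval x = (Lf x) ^ q ^ (i + 1) := by
    intro x
    rw [hLf, hpow_sum, hψ, eval_finset_sum]
    refine Finset.sum_congr rfl fun j hj => ?_
    obtain ⟨h1, h2⟩ := Finset.mem_Icc.mp hj
    rw [hpow_add, mul_pow, mul_pow]
    simp only [eval_add, eval_mul, eval_C, eval_pow, eval_X]
    rw [← pow_mul x, ← pow_mul x, ← pow_add q, ← pow_add q]
    congr 2
    · have : j + (i + 1) = (j + i + 1 - m) + m := by omega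
      rw [this, hwrap]
    · have : m - j + (i + 1) = (i + 1 - j) + m := by omega
      rw [this, hwrap]
  have hqinj : ∀ a b : ℕ, q ^ a = q ^ b → a = b :=
    fun a b h => Nat.pow_right_injective hq2 h
  have hcoeff : ψ.coeff (q ^ (i + 1 - j₀)) = (lam j₀ ^ q ^ (m - j₀)) ^ q ^ (i + 1) := by
    rw [hψ, finset_sum_coeff]
    rw [Finset.sum_eq_single j₀]
    · have h1' : q ^ (i + 1 - j₀) ≠ q ^ (j₀ + i + 1 - m) := by
        intro h; have := hqinj _ _ h; omega
      simp only [coeff_add, coeff_C_mul, coeff_X_pow]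
      rw [if_neg h1']; simp
    · intro j hj hjne
      obtain ⟨h1, h2⟩ := Finset.mem_Icc.mp hj
      have hc1' : ¬ (q ^ (i + 1 - j₀) = q ^ (j + i + 1 - m)) := by
        intro h; have := hqinj _ _ h; omega
      have hc2' : ¬ (q ^ (i + 1 - j₀) = q ^ (i + 1 - j)) := by
        intro h; have := hqinj _ _ h; omega
      simp only [coeff_add, coeff_C_mul, coeff_X_pow]
      rw [if_neg hc1', if_neg hc2']; simp
    · intro h; exact absurd hj₀mem h
  have hψne : ψ ≠ 0 := by
    intro h
    have hnz : (lam j₀ ^ q ^ (m - j₀)) ^ q ^ (i + 1) ≠ 0 :=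
      pow_ne_zero _ (pow_ne_zero _ hj₀)
    apply hnz
    rw [← hcoeff, h, coeff_zero]
  have hdeg : ψ.natDegree ≤ q ^ (2 * i + 2 - m) := by
    rw [hψ]
    apply Polynomial.natDegree_sum_le_of_forall_le
    intro j hj
    obtain ⟨h1, h2⟩ := Finset.mem_Icc.mp hj
    refine (Polynomial.natDegree_add_le _ _).trans (max_le ?_ ?_)
    · exact (Polynomial.natDegree_C_mul_X_pow_le _ _).trans
        (Nat.pow_le_pow_right (by omega) (by omega))
    · exact (Polynomial.natDegree_C_mul_X_pow_le _ _).trans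
        (Nat.pow_le_pow_right (by omega) (by omega))
  haveI : Fintype W := Fintype.ofFinite W
  have hcardW : Fintype.card W ≤ q ^ (2 * i + 2 - m) := by
    have hmem : ∀ w : W, (w : K) ∈ ψ.roots.toFinset := by
      intro w
      rw [Multiset.mem_toFinset, mem_roots hψne]
      have hw : Lf (w : K) = 0 := w.2
      show ψ.eval (w : K) = 0
      rw [heval, hw, zero_pow (by positivity)]
    have hsub : Fintype.card W ≤ ψ.roots.toFinset.card := by
      calc Fintype.card W ≤ Fintype.card {x // x ∈ ψ.roots.toFinset} :=
            Fintype.card_le_of_injective (fun w => ⟨(w : K), hmem w⟩)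
              (fun a b hab => Subtype.ext (by simpa using Subtype.ext_iff.mp hab))
        _ = ψ.roots.toFinset.card := Fintype.card_coe _
    calc Fintype.card W ≤ ψ.roots.toFinset.card := hsub
      _ ≤ Multiset.card ψ.roots := ψ.roots.toFinset_card_le
      _ ≤ ψ.natDegree := ψ.card_roots'
      _ ≤ q ^ (2 * i + 2 - m) := hdeg
  have hfW : Fintype.card W = q ^ Module.finrank F W := Module.card_eq_pow_finrank
  have hdim : Module.finrank F ↥W ≤ 2 * i + 2 - m := by
    rw [hfW] at hcardW
    exact (Nat.pow_le_pow_iff_right hq2).mp hcardW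
  refine ⟨W, hset, hdim, ?_⟩
  have hWle : Module.finrank F ↥W ≤ m := hfr ▸ Submodule.finrank_le W
  rw [hfr]
  omega
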